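/- Let P be a finitely generated integral saturated commutative monoid. Choose a decomposition P^gp = G_fr ⊕ G_tor of its Grothendieck group into a free part and the torsion part, and set P_fr = P ∩ G_fr and P_tor the torsion subgroup of P. Then P = P_fr ⊕ P_tor, i.e., every x ∈ P factors uniquely as x = y·z with y ∈ P_fr and z ∈ P_tor. -/
import Mathlib


/-- Let `P` be a finitely generated integral saturated commutative monoid, modelled
as a finitely generated submonoid of the commutative group `G = P^gp` which it
generates, saturated in `G`.  Given a decomposition `G = G_fr ⊕ G_tor` of the
Grothendieck group into a torsion-free part `G_fr` and the torsion part `G_tor`,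
set `P_fr = P ∩ G_fr` and `P_tor` the torsion elements.  Then `P = P_fr ⊕ P_tor`:
every `x ∈ P` factors uniquely as `x = y * z` with `y ∈ P ∩ G_fr` and `z` a
torsion element of `P`. -/
theorem saturated_monoid_splits_free_and_torsion
    {G : Type*} [CommGroup G] (P : Submonoid G) (hfg : P.FG)
    (hgen : ∀ g : G, ∃ a ∈ P, ∃ b ∈ P, g = a * b⁻¹)
    (hsat : ∀ x : G, (∃ n : ℕ, 0 < n ∧ x ^ n ∈ P) → x ∈ P)
    (Gfr Gtor : Subgroup G)
    (hGtor : ∀ x : G, x ∈ Gtor ↔ ∃ n : ℕ, 0 < n ∧ x ^ n = 1)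
    (hGfr : ∀ x ∈ Gfr, (∃ n : ℕ, 0 < n ∧ x ^ n = 1) → x = 1)
    (hdec : ∀ g : G, ∃ y ∈ Gfr, ∃ z ∈ Gtor, g = y * z)
    :
    ∀ x ∈ P, ∃ y z : G,
      (y ∈ Gfr ∧ y ∈ P) ∧ (z ∈ Gtor ∧ z ∈ P) ∧ x = y * z ∧
      (∀ y' z' : G, y' ∈ Gfr → y' ∈ P → z' ∈ Gtor → z' ∈ P → x = y' * z' →
        y' = y ∧ z' = z) := by
  intro x hx
  obtain ⟨y, hy, z, hz, hxyz⟩ := hdec x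
  obtain ⟨n, hn, hzn⟩ := (hGtor z).1 hz
  have hyP : y ∈ P := by
    apply hsat
    refine ⟨n, hn, ?_⟩
    have : y ^ n = x ^ n := by
      rw [hxyz, mul_pow, hzn, mul_one]
    rw [this]
    exact pow_mem hx n
  have hzP : z ∈ P := by
    apply hsat
    exact ⟨n, hn, hzn ▸ one_mem P⟩
  refine ⟨y, z, ⟨hy, hyP⟩, ⟨hz, hzP⟩, hxyz, ?_⟩
  intro y' z' hy' _ hz' _ hxyz'
  have key : y' / y = z / z' := by
    have : y * z = y' * z' := hxyz ▸ hxyz'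
    rw [div_eq_div_iff_mul_eq_mul]
    rw [mul_comm z y]
    exact this.symm
  have hmem : y' / y ∈ Gtor := key ▸ div_mem hz hz'
  have h1 : y' / y = 1 := hGfr _ (div_mem hy' hy) ((hGtor _).1 hmem)
  refine ⟨div_eq_one.mp h1, ?_⟩
  have h2 : z / z' = 1 := key ▸ h1
  exact (div_eq_one.mp h2).symm
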